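/- If Q_0 ≤ m·α initially, Q_{t+1} ≤ Q_t·(1 − 1/α) whenever Q_t > α, and Q_{t+1} ≤ Q_t − 1 whenever 0 < Q_t ≤ α, then Q_t = 0 for all t ≥ α + α·log(m), where α ≥ 1. -/

import Mathlib

/-- Lower bound on log: `1 - 1/x ≤ log x` for `x > 0`. -/
lemma stmt7_loglb (x : ℝ) (hx : 0 < x) : 1 - 1/x ≤ Real.log x := by
  have h := Real.log_le_sub_one_of_pos (show (0:ℝ) < 1/x by positivity)
  rw [one_div, Real.log_inv] at h
  have : -Real.log x ≤ x⁻¹ - 1 := h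
  rw [one_div]
  linarith

/-- Key arithmetic inequality for the boundary case. -/
lemma stmt7_aux1 (α q q' L : ℝ) (hα : 1 ≤ α) (hq : α < q)
    (hq' : q' * α ≤ q * (α - 1)) (hsmall : (α - 1) * q ≤ α ^ 2)
    (hL : q - α ≤ q * L) : q' + 1 ≤ α + α * L := by
  have hαpos : (0:ℝ) < α := by linarith
  have hqpos : (0:ℝ) < q := by linarith
  -- goal slack times α*q equals (q-α)*(α^2 - (α-1)*q) + α^2*(q*L-(q-α)) + q*(q*(α-1)-q'*α)
  nlinarith [mul_pos hαpos hqpos, mul_nonneg (le_of_lt hqpos) (sub_nonneg.mpr hq'),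
    mul_nonneg (sq_nonneg α) (sub_nonneg.mpr hL),
    mul_nonneg (by linarith : (0:ℝ) ≤ q - α) (sub_nonneg.mpr hsmall)]

/-- If the number `Q t` of uncovered colors satisfies `Q 0 ≤ m * α`, decays
geometrically (`Q (t+1) ≤ Q t * (1 - 1/α)`) whenever `Q t > α`, and decreases by at
least one whenever `0 < Q t ≤ α`, then `Q t = 0` for all `t ≥ α + α * log m`. -/
theorem stmt7 (Q : ℕ → ℕ) (α m : ℝ) (hα : 1 ≤ α) (hm : 1 ≤ m)
    (h0 : (Q 0 : ℝ) ≤ m * α)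
    (hgeo : ∀ t, α < (Q t : ℝ) → (Q (t + 1) : ℝ) ≤ (Q t : ℝ) * (1 - 1 / α))
    (hlin : ∀ t, 0 < Q t → (Q t : ℝ) ≤ α → Q (t + 1) ≤ Q t - 1)
    (hzero : ∀ t, Q t = 0 → Q (t + 1) = 0) :
    ∀ t : ℕ, α + α * Real.log m ≤ t → Q t = 0 := by
  have hαpos : (0:ℝ) < α := by linarith
  set φ : ℕ → ℝ := fun t => if (Q t : ℝ) ≤ α then (Q t : ℝ)
    else α + α * Real.log ((Q t : ℝ) / α) with hφ
  -- potential decreases by at least 1 each step while Q > 0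
  have key : ∀ t, Q t ≠ 0 → φ (t + 1) + 1 ≤ φ t := by
    intro t hQ
    have hQpos : 1 ≤ Q t := Nat.one_le_iff_ne_zero.mpr hQ
    have hQ1 : (1:ℝ) ≤ (Q t : ℝ) := by exact_mod_cast hQpos
    by_cases hc : (Q t : ℝ) ≤ α
    · -- linear phase
      have hlin' := hlin t (Nat.pos_of_ne_zero hQ) hc
      have h1 : (Q (t + 1) : ℝ) ≤ (Q t : ℝ) - 1 := by
        have : ((Q (t + 1) : ℕ) : ℝ) ≤ ((Q t - 1 : ℕ) : ℝ) := by exact_mod_cast hlin'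
        rwa [Nat.cast_sub hQpos, Nat.cast_one] at this
      have h2 : (Q (t + 1) : ℝ) ≤ α := by linarith
      simp only [hφ, if_pos h2, if_pos hc]
      linarith
    · push_neg at hc
      have hq := hgeo t hc
      set q : ℝ := (Q t : ℝ) with hqdef
      have hqpos : (0:ℝ) < q := by linarith
      have hq'α : (Q (t + 1) : ℝ) * α ≤ q * (α - 1) := by
        have h := mul_le_mul_of_nonneg_right hq (le_of_lt hαpos)
        have : q * (1 - 1/α) * α = q * (α - 1) := by field_simp
        linarith [h, this]
      by_cases hc2 : (Q (t + 1) : ℝ) ≤ α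
      · simp only [hφ, if_pos hc2, if_neg (show ¬ ((Q t : ℝ) ≤ α) from not_le.mpr hc)]
        by_cases hsmall : (α - 1) * q ≤ α ^ 2
        · have hL : q - α ≤ q * Real.log (q / α) := by
            have hlb := stmt7_loglb (q / α) (by positivity)
            have h1 : 1 - α / q ≤ Real.log (q / α) := by
              rw [one_div_div] at hlb; linarith
            have := mul_le_mul_of_nonneg_left h1 (le_of_lt hqpos)
            have hqa : q * (1 - α / q) = q - α := by field_simp
            linarith [this, hqa]
          exact stmt7_aux1 α q _ _ hα hc hq'α hsmall hL
        · push_neg at hsmall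
          -- then α > 1 and q/α > α/(α-1), so log(q/α) ≥ 1/α
          have hα1 : 1 < α := by
            by_contra h
            push_neg at h
            have : α = 1 := le_antisymm h hα
            rw [this] at hsmall; nlinarith
          have hfrac : α / (α - 1) ≤ q / α := by
            rw [div_le_div_iff₀ (by linarith) hαpos]
            nlinarith
          have hlog1 : (1:ℝ) / α ≤ Real.log (α / (α - 1)) := by
            have h := Real.log_le_sub_one_of_pos
              (div_pos (by linarith : (0:ℝ) < α - 1) hαpos)
            have hrw : Real.log (α / (α - 1)) = -Real.log ((α - 1) / α) := by
              rw [← Real.log_inv]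
              congr 1
              rw [inv_div]
            rw [hrw]
            have : (α - 1) / α - 1 = -(1 / α) := by field_simp; ring
            linarith [h, this]
          have hlog2 : Real.log (α / (α - 1)) ≤ Real.log (q / α) :=
            Real.log_le_log (div_pos hαpos (by linarith)) hfrac
          have : 1 ≤ α * Real.log (q / α) := by
            have h1 : (1:ℝ) / α ≤ Real.log (q / α) := le_trans hlog1 hlog2
            have := mul_le_mul_of_nonneg_left h1 (le_of_lt hαpos)
            have hone : α * (1 / α) = 1 := by field_simp
            linarith [this, hone]
          linarith
      · push_neg at hc2
        simp only [hφ, if_neg (not_le.mpr hc2), if_neg (show ¬ ((Q t : ℝ) ≤ α) from not_le.mpr hc)]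
        set q' : ℝ := (Q (t + 1) : ℝ) with hq'def
        have hq'pos : (0:ℝ) < q' := by linarith
        have hfacpos : (0:ℝ) < 1 - 1/α := by
          by_contra h
          push_neg at h
          have : q * (1 - 1/α) ≤ 0 := mul_nonpos_of_nonneg_of_nonpos (le_of_lt hqpos) h
          linarith
        have harg : q' / α ≤ q / α * (1 - 1/α) := by
          rw [div_eq_mul_inv, div_eq_mul_inv]
          calc q' * α⁻¹ ≤ q * (1 - 1/α) * α⁻¹ :=
                mul_le_mul_of_nonneg_right hq (by positivity)
            _ = q * α⁻¹ * (1 - 1/α) := by ring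
        have hmono : Real.log (q' / α) ≤ Real.log (q / α * (1 - 1/α)) :=
          Real.log_le_log (div_pos hq'pos hαpos) harg
        have hsplit : Real.log (q / α * (1 - 1/α)) =
            Real.log (q / α) + Real.log (1 - 1/α) := by
          rw [Real.log_mul (by positivity) (ne_of_gt hfacpos)]
        have hlf : Real.log (1 - 1/α) ≤ -(1/α) := by
          have h := Real.log_le_sub_one_of_pos hfacpos
          linarith
        have hαlf : α * Real.log (1 - 1/α) ≤ -1 := by
          have := mul_le_mul_of_nonneg_left hlf (le_of_lt hαpos)
          have hone : α * -(1/α) = -1 := by field_simp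
          linarith [this, hone]
        have : α * Real.log (q' / α) ≤ α * Real.log (q / α) - 1 := by
          calc α * Real.log (q' / α) ≤ α * Real.log (q / α * (1 - 1/α)) :=
                mul_le_mul_of_nonneg_left hmono (le_of_lt hαpos)
            _ = α * Real.log (q / α) + α * Real.log (1 - 1/α) := by
                rw [hsplit]; ring
            _ ≤ α * Real.log (q / α) - 1 := by linarith
        linarith
  -- accumulate: t + φ t ≤ φ 0 while Q t ≠ 0
  have acc : ∀ t, Q t ≠ 0 → (t : ℝ) + φ t ≤ φ 0 := by
    intro t
    induction t with
    | zero => intro _; simp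
    | succ n ih =>
      intro h
      have hn : Q n ≠ 0 := fun h0' => h (hzero n h0')
      have h1 := ih hn
      have h2 := key n hn
      push_cast
      linarith
  -- positivity of potential
  have φpos : ∀ t, Q t ≠ 0 → 0 < φ t := by
    intro t hQ
    have hQ1 : (1:ℝ) ≤ (Q t : ℝ) := by exact_mod_cast Nat.one_le_iff_ne_zero.mpr hQ
    by_cases hc : (Q t : ℝ) ≤ α
    · simp only [hφ, if_pos hc]; linarith
    · push_neg at hc
      simp only [hφ, if_neg (not_le.mpr hc)]
      have : 0 ≤ Real.log ((Q t : ℝ) / α) :=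
        Real.log_nonneg ((one_le_div hαpos).mpr (le_of_lt hc))
      nlinarith
  -- initial bound
  have hφ0 : φ 0 ≤ α + α * Real.log m := by
    have hlm : 0 ≤ Real.log m := Real.log_nonneg hm
    by_cases hc : (Q 0 : ℝ) ≤ α
    · simp only [hφ, if_pos hc]; nlinarith
    · push_neg at hc
      simp only [hφ, if_neg (not_le.mpr hc)]
      have hdiv : (Q 0 : ℝ) / α ≤ m := by
        rw [div_le_iff₀ hαpos]; linarith
      have := Real.log_le_log (div_pos (by linarith) hαpos) hdiv
      nlinarith
  intro t ht
  by_contra h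
  have h1 := acc t h
  have h2 := φpos t h
  linarith
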